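/- For every positive integer k, there are at most k(k+1)/2 − 1 consecutive even values of p(·,k): for every natural number i there exists n with i ≤ n ≤ i + k(k+1)/2 − 1 such that p(n, k) is odd. -/

import Mathlib

/-- `p n k` is the number of partitions of `n` into parts each of size at most `k`
(with `p 0 k = 1`). -/
def p (n k : ℕ) : ℕ :=
  (Finset.univ.filter (fun P : n.Partition => ∀ i ∈ P.parts, i ≤ k)).card

lemma p_zero (k : ℕ) : p 0 k = 1 := by
  rw [p]
  have : (Finset.univ.filter (fun P : Nat.Partition 0 => ∀ i ∈ P.parts, i ≤ k)) = {⟨0, by simp, by simp⟩} := by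
    ext P
    simp only [Finset.mem_filter, Finset.mem_univ, true_and, Finset.mem_singleton]
    constructor
    · intro _
      ext1
      simpa using (Multiset.sum_eq_zero_iff.mp P.parts_sum)
    · rintro rfl; simp
  rw [this, Finset.card_singleton]

lemma p_succ_zero (n : ℕ) : p (n+1) 0 = 0 := by
  rw [p, Finset.card_eq_zero, Finset.filter_eq_empty_iff]
  intro P _ h
  have : P.parts = 0 := Multiset.eq_zero_of_forall_notMem fun i hi =>
    absurd (P.parts_pos hi) (by have := h i hi; omega)
  have hs := P.parts_sum
  rw [this] at hs
  simp at hs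

lemma p_rec (n k : ℕ) :
    p n (k+1) = p n k + (if k+1 ≤ n then p (n - (k+1)) (k+1) else 0) := by
  classical
  rw [p]
  set S := Finset.univ.filter (fun P : n.Partition => ∀ i ∈ P.parts, i ≤ k+1) with hS
  rw [← Finset.card_filter_add_card_filter_not (s := S)
      (p := fun P => (k+1) ∉ P.parts)]
  have hmem : ∀ P : n.Partition, P ∈ S.filter (fun P => ¬ (k+1) ∉ P.parts) ↔
      ((∀ i ∈ P.parts, i ≤ k+1) ∧ (k+1) ∈ P.parts) := by
    intro P
    simp [hS, Finset.mem_filter]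
  congr 1
  · -- partitions not containing k+1 : parts ≤ k
    rw [p]
    congr 1
    rw [hS, Finset.filter_filter]
    ext P
    simp only [Finset.mem_filter, Finset.mem_univ, true_and]
    constructor
    · rintro ⟨h1, h2⟩ i hi
      have h3 := h1 i hi
      by_contra h
      have : i = k + 1 := by omega
      exact h2 (this ▸ hi)
    · intro h
      exact ⟨fun i hi => (h i hi).trans (by omega), fun hc => by have := h _ hc; omega⟩
  · by_cases hkn : k + 1 ≤ n
    · rw [if_pos hkn, p]
      have hsum : ∀ P : n.Partition, (k+1) ∈ P.parts → (P.parts.erase (k+1)).sum = n - (k+1) := by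
        intro P h2
        have h3 := Multiset.sum_erase h2
        rw [P.parts_sum] at h3
        omega
      refine Finset.card_bij'
        (fun P hP => (⟨P.parts.erase (k+1),
            fun {i} hi => P.parts_pos (Multiset.mem_of_mem_erase hi),
            hsum P ((hmem P).1 hP).2⟩ : (n - (k+1)).Partition))
        (fun Q _ => (⟨(k+1) ::ₘ Q.parts,
            fun {i} hi => by
              rcases Multiset.mem_cons.1 hi with rfl | h
              · omega
              · exact Q.parts_pos h,
            by rw [Multiset.sum_cons, Q.parts_sum]; omega⟩ : n.Partition))
        ?_ ?_ ?_ ?_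
      · intro P hP
        simp only [Finset.mem_filter, Finset.mem_univ, true_and]
        intro i hi
        exact ((hmem P).1 hP).1 i (Multiset.mem_of_mem_erase hi)
      · intro Q hQ
        rw [hmem]
        simp only [Finset.mem_filter, Finset.mem_univ, true_and] at hQ
        refine ⟨fun i hi => ?_, Multiset.mem_cons_self _ _⟩
        rcases Multiset.mem_cons.1 hi with rfl | h
        · omega
        · exact hQ i h
      · intro P hP
        ext1
        exact Multiset.cons_erase ((hmem P).1 hP).2
      · intro Q hQ
        ext1
        simp [Multiset.erase_cons_head]
    · rw [if_neg hkn]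
      rw [Finset.card_eq_zero, Finset.filter_eq_empty_iff]
      intro P _
      simp only [not_not]
      intro hc
      have h1 : k + 1 ≤ P.parts.sum := Multiset.le_sum_of_mem hc
      rw [P.parts_sum] at h1
      omega

section FSection
open PowerSeries

noncomputable def F (k : ℕ) : PowerSeries (ZMod 2) := PowerSeries.mk fun n => (p n k : ZMod 2)

lemma F_mul_prod (k : ℕ) :
    F k * ∏ j ∈ Finset.range k, (1 - (X : PowerSeries (ZMod 2))^(j+1)) = 1 := by
  induction k with
  | zero =>
    simp only [Finset.range_zero, Finset.prod_empty, mul_one]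
    ext n
    cases n with
    | zero => simp [F, p_zero]
    | succ m => simp [F, p_succ_zero]
  | succ k ih =>
    rw [Finset.prod_range_succ]
    have key : F (k+1) * (1 - (X : PowerSeries (ZMod 2))^(k+1)) = F k := by
      ext n
      rw [mul_sub, mul_one, map_sub, PowerSeries.coeff_mul_X_pow']
      simp only [F, PowerSeries.coeff_mk]
      rw [p_rec n k]
      push_cast
      split_ifs with h <;> ring
    have h2 : F (k+1) * ((∏ j ∈ Finset.range k, (1 - (X : PowerSeries (ZMod 2))^(j+1))) * (1 - X^(k+1)))
        = (F (k+1) * (1 - X^(k+1))) * ∏ j ∈ Finset.range k, (1 - (X : PowerSeries (ZMod 2))^(j+1)) := by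
      ring
    rw [h2, key, ih]

end FSection

open Polynomial

noncomputable def Q (k : ℕ) : Polynomial (ZMod 2) :=
  ∏ j ∈ Finset.range k, (1 - X^(j+1))

lemma Q_factor_eq (j : ℕ) : (1 - X^(j+1) : Polynomial (ZMod 2)) = X^(j+1) + 1 := by
  have : (-(X^(j+1)) : Polynomial (ZMod 2)) = X^(j+1) := CharTwo.neg_eq _
  rw [sub_eq_add_neg, this]; ring

lemma Q_monic (k : ℕ) : (Q k).Monic := by
  apply monic_prod_of_monic
  intro j _
  rw [Q_factor_eq]
  exact monic_X_pow_add_C _ (by omega)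

lemma Q_natDegree (k : ℕ) : (Q k).natDegree = k * (k+1) / 2 := by
  rw [Q, natDegree_prod_of_monic]
  · have h1 : ∀ j ∈ Finset.range k, (1 - X^(j+1) : Polynomial (ZMod 2)).natDegree = j + 1 := by
      intro j _
      rw [Q_factor_eq]
      exact natDegree_X_pow_add_C
    have h2 : ∑ j ∈ Finset.range k, (j+1) = ∑ i ∈ Finset.range (k+1), i := by
      rw [Finset.sum_range_succ']
      simp
    rw [Finset.sum_congr rfl h1, h2]
    have h3 := Finset.sum_range_id_mul_two (k+1)
    have h4 : (k+1) * k = k * (k+1) := Nat.mul_comm _ _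
    simp only [Nat.add_sub_cancel] at h3
    omega
  · intro j _
    rw [Q_factor_eq]
    exact monic_X_pow_add_C _ (by omega)

lemma Q_coeff_zero (k : ℕ) : (Q k).coeff 0 = 1 := by
  rw [coeff_zero_eq_eval_zero, Q]
  simp [eval_prod]

lemma Q_coeff_top (k : ℕ) : (Q k).coeff (k * (k+1) / 2) = 1 := by
  have := (Q_monic k).leadingCoeff
  rwa [leadingCoeff, Q_natDegree] at this

lemma Q_coe (k : ℕ) : ((Q k : Polynomial (ZMod 2)) : PowerSeries (ZMod 2))
    = ∏ j ∈ Finset.range k, (1 - (PowerSeries.X : PowerSeries (ZMod 2))^(j+1)) := by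
  have h := map_prod (Polynomial.coeToPowerSeries.ringHom (R := ZMod 2))
      (fun j => 1 - X^(j+1)) (Finset.range k)
  simp only [Polynomial.coeToPowerSeries.ringHom_apply, map_sub, map_one, map_pow] at h
  rw [Q, h]
  simp [Polynomial.coeToPowerSeries.ringHom_apply, Polynomial.coe_X]

lemma hrec (k n : ℕ) :
    ∑ ab ∈ Finset.HasAntidiagonal.antidiagonal n, (Q k).coeff ab.1 * (p ab.2 k : ZMod 2)
      = if n = 0 then 1 else 0 := by
  have h : ((Q k : Polynomial (ZMod 2)) : PowerSeries (ZMod 2)) *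
      (PowerSeries.mk fun n => (p n k : ZMod 2)) = 1 := by
    rw [Q_coe, mul_comm]; exact F_mul_prod k
  have h2 := congrArg (PowerSeries.coeff (R := ZMod 2) n) h
  rw [PowerSeries.coeff_mul, PowerSeries.coeff_one] at h2
  simpa [Polynomial.coeff_coe] using h2

theorem stmt_10 (k : ℕ) (hk : 0 < k) :
    ∀ i : ℕ, ∃ n : ℕ, i ≤ n ∧ n ≤ i + k * (k + 1) / 2 - 1 ∧ Odd (p n k) := by
  intro i
  by_contra hcon
  push_neg at hcon
  set N := k * (k + 1) / 2 with hNdef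
  have hN : 1 ≤ N := by
    have := Nat.mul_le_mul hk (show 2 ≤ k + 1 by omega)
    omega
  have hzero : ∀ n, i ≤ n → n ≤ i + N - 1 → (p n k : ZMod 2) = 0 := by
    intro n h1 h2
    have h3 := hcon n h1 h2
    rw [Nat.not_odd_iff_even] at h3
    exact (ZMod.natCast_eq_zero_iff _ 2).mpr (even_iff_two_dvd.mp h3)
  have hfwd : ∀ n, i ≤ n → (p n k : ZMod 2) = 0 := by
    intro n
    induction n using Nat.strong_induction_on with
    | _ n IH =>
      intro hin
      by_cases hsmall : n ≤ i + N - 1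
      · exact hzero n hin hsmall
      · have hn1 : n ≠ 0 := by omega
        have h := hrec k n
        rw [if_neg hn1, Finset.sum_eq_single_of_mem (0, n) (by simp) ?side] at h
        · rw [Q_coeff_zero, one_mul] at h
          exact h
        case side =>
          rintro ⟨a, b⟩ hab hne
          rw [Finset.HasAntidiagonal.mem_antidiagonal] at hab
          rcases Nat.lt_or_ge N a with hA | hA
          · rw [coeff_eq_zero_of_natDegree_lt (by rw [Q_natDegree]; exact hA), zero_mul]
          · have ha : a ≠ 0 := by
              rintro rfl
              exact hne (by simpa using hab)
            have hb1 : b < n := by omega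
            have hb2 : i ≤ b := by omega
            rw [IH b hb1 hb2, mul_zero]
  have hback : ∀ j n, i ≤ n + j → (p n k : ZMod 2) = 0 := by
    intro j
    induction j with
    | zero => intro n h; exact hfwd n (by omega)
    | succ j IH =>
      intro n hle
      by_cases h2 : i ≤ n + j
      · exact IH n h2
      · have h := hrec k (n + N)
        rw [if_neg (by omega), Finset.sum_eq_single_of_mem (N, n)
            (by rw [Finset.HasAntidiagonal.mem_antidiagonal]; omega) ?side2] at h
        · rw [Q_coeff_top, one_mul] at h
          exact h
        case side2 =>
          rintro ⟨a, b⟩ hab hne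
          rw [Finset.HasAntidiagonal.mem_antidiagonal] at hab
          rcases Nat.lt_or_ge N a with hA | hA
          · rw [coeff_eq_zero_of_natDegree_lt (by rw [Q_natDegree]; exact hA), zero_mul]
          · have ha : a ≠ N := by
              rintro rfl
              exact hne (by simp; omega)
            have hb : i ≤ b + j := by omega
            rw [IH b hb, mul_zero]
  have hfin := hback i 0 (by omega)
  rw [p_zero] at hfin
  simp at hfin
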